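/- Let M be an n-manifold and S a finite set. The evaluation-at-origins map Emb(ℝⁿ × S, M) → Conf(S, M), sending an embedding e to the configuration (e(0,s))_{s ∈ S}, is a Serre fibration. -/

import Mathlib

/-- A map is a Serre fibration if it has the homotopy lifting property with respect to
all cubes `Iᵐ`. -/
def IsSerreFibration {X Y : Type*} [TopologicalSpace X] [TopologicalSpace Y]
    (p : X → Y) : Prop :=
  ∀ (m : ℕ) (F : C((Fin m → unitInterval) × unitInterval, Y))
    (f₀ : C(Fin m → unitInterval, X)),
    (∀ q, p (f₀ q) = F (q, 0)) →
    ∃ G : C((Fin m → unitInterval) × unitInterval, X),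
      (∀ q, G (q, 0) = f₀ q) ∧ ∀ z, p (G z) = F z

/-- The space `Emb(ℝⁿ × S, M)` of open embeddings of `S` copies of `ℝⁿ` into `M`,
topologized (as a subspace of the mapping space) with the compact-open topology. -/
def EmbSp (n : ℕ) (S M : Type*) [TopologicalSpace S] [TopologicalSpace M] :=
  {e : C(EuclideanSpace ℝ (Fin n) × S, M) // Topology.IsOpenEmbedding e}

noncomputable instance (n : ℕ) (S M : Type*) [TopologicalSpace S] [TopologicalSpace M] :
    TopologicalSpace (EmbSp n S M) :=
  instTopologicalSpaceSubtype

/-- The configuration space `Conf(S, M)` of injections `S → M`, as a subspace of `Mˢ`. -/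
def ConfSp (S M : Type*) [TopologicalSpace M] := {c : S → M // Function.Injective c}

instance (S M : Type*) [TopologicalSpace M] : TopologicalSpace (ConfSp S M) :=
  instTopologicalSpaceSubtype

/-- Evaluation at the origins, `Emb(ℝⁿ × S, M) → Conf(S, M)`. -/
def evalOrigins (n : ℕ) (S M : Type*) [TopologicalSpace S] [TopologicalSpace M]
    (e : EmbSp n S M) : ConfSp S M :=
  ⟨fun s => e.1 (0, s), fun s t h => by
    simpa using congrArg Prod.snd
      (e.2.injective (a₁ := ((0 : EuclideanSpace ℝ (Fin n)), s)) (a₂ := (0, t)) h)⟩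


section Auxiliary

open Set Topology unitInterval

open Set Topology unitInterval

noncomputable section

variable {X Y : Type*} [TopologicalSpace X] [TopologicalSpace Y]

/-- Pasting two continuous functions along closed pieces. -/
theorem pasteIf {α β : Type*} [TopologicalSpace α] [TopologicalSpace β]
    {f g : α → β} {D C₁ C₂ : Set α} [DecidablePred (· ∈ C₁)]
    (h₁ : IsClosed C₁) (h₂ : IsClosed C₂) (hD : D ⊆ C₁ ∪ C₂)
    (hf : ContinuousOn f (D ∩ C₁)) (hg : ContinuousOn g (D ∩ C₂))
    (heq : EqOn f g (D ∩ C₁ ∩ C₂)) :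
    ContinuousOn (C₁.piecewise f g) D := by
  intro x hx
  have hpe : ∀ z ∈ C₁, C₁.piecewise f g z = f z := fun z hz => Set.piecewise_eq_of_mem _ _ _ hz
  have hpn : ∀ z ∉ C₁, C₁.piecewise f g z = g z := fun z hz => Set.piecewise_eq_of_notMem _ _ _ hz
  by_cases hx1 : x ∈ C₁
  · by_cases hx2 : x ∈ C₂
    · have hDeq : 𝓝[D] x = 𝓝[D ∩ C₁] x ⊔ 𝓝[D ∩ C₂] x := by
        rw [← nhdsWithin_union, ← inter_union_distrib_left, inter_eq_left.mpr hD]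
      rw [ContinuousWithinAt, hDeq, Filter.tendsto_sup]
      constructor
      · have t1 : Filter.Tendsto f (𝓝[D ∩ C₁] x) (𝓝 (C₁.piecewise f g x)) := by
          rw [hpe x hx1]; exact (hf x ⟨hx, hx1⟩).tendsto
        refine Filter.Tendsto.congr' ?_ t1
        filter_upwards [self_mem_nhdsWithin] with z hz
        exact (hpe z hz.2).symm
      · have t2 : Filter.Tendsto g (𝓝[D ∩ C₂] x) (𝓝 (C₁.piecewise f g x)) := by
          rw [hpe x hx1, heq ⟨⟨hx, hx1⟩, hx2⟩]; exact (hg x ⟨hx, hx2⟩).tendsto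
        refine Filter.Tendsto.congr' ?_ t2
        filter_upwards [self_mem_nhdsWithin] with z hz
        by_cases hz1 : z ∈ C₁
        · rw [hpe z hz1]; exact (heq ⟨⟨hz.1, hz1⟩, hz.2⟩).symm
        · rw [hpn z hz1]
    · have hmem : D ∩ C₁ ∈ 𝓝[D] x := by
        have h1 : C₂ᶜ ∈ 𝓝 x := h₂.isOpen_compl.mem_nhds hx2
        have h2 : D ∩ C₂ᶜ ∈ 𝓝[D] x :=
          Filter.inter_mem self_mem_nhdsWithin (mem_nhdsWithin_of_mem_nhds h1)
        exact Filter.mem_of_superset h2 (fun z hz => ⟨hz.1, (hD hz.1).resolve_right hz.2⟩)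
      have hcw : ContinuousWithinAt f D x := (hf x ⟨hx, hx1⟩).mono_of_mem_nhdsWithin hmem
      refine hcw.congr_of_eventuallyEq ?_ (hpe x hx1)
      filter_upwards [hmem] with z hz using hpe z hz.2
  · have hx2 : x ∈ C₂ := (hD hx).resolve_left hx1
    have hmem : D ∩ C₂ ∈ 𝓝[D] x := by
      have h1 : C₁ᶜ ∈ 𝓝 x := h₁.isOpen_compl.mem_nhds hx1
      have h2 : D ∩ C₁ᶜ ∈ 𝓝[D] x :=
        Filter.inter_mem self_mem_nhdsWithin (mem_nhdsWithin_of_mem_nhds h1)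
      exact Filter.mem_of_superset h2 (fun z hz => ⟨hz.1, (hD hz.1).resolve_left hz.2⟩)
    have hcw : ContinuousWithinAt g D x := (hg x ⟨hx, hx2⟩).mono_of_mem_nhdsWithin hmem
    refine hcw.congr_of_eventuallyEq ?_ (hpn x hx1)
    filter_upwards [hmem] with z hz
    by_cases hz1 : z ∈ C₁
    · rw [hpe z hz1]; exact heq ⟨⟨hz.1, hz1⟩, hz.2⟩
    · rw [hpn z hz1]

/-- A (two-sided) trivialization of `p` relative to `F` over a subset `K` of the cube,
with fiber over `F z₀`. -/
def TrivOn (p : X → Y) {k : ℕ} (F : (Fin k → I) → Y) (K : Set (Fin k → I))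
    (z₀ : Fin k → I) : Prop :=
  ∃ Θ Ξ : (Fin k → I) → X → X,
    ContinuousOn (fun q : (Fin k → I) × X => Θ q.1 q.2) (K ×ˢ {e | p e = F z₀}) ∧
    ContinuousOn (fun q : (Fin k → I) × X => Ξ q.1 q.2) {q | q.1 ∈ K ∧ p q.2 = F q.1} ∧
    (∀ z ∈ K, ∀ e, p e = F z₀ → p (Θ z e) = F z) ∧
    (∀ z ∈ K, ∀ e, p e = F z → p (Ξ z e) = F z₀) ∧
    (∀ z ∈ K, ∀ e, p e = F z₀ → Ξ z (Θ z e) = e) ∧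
    (∀ z ∈ K, ∀ e, p e = F z → Θ z (Ξ z e) = e)

theorem TrivOn.transfer {p : X → Y} {k : ℕ} {F : (Fin k → I) → Y} {K : Set (Fin k → I)}
    {z₀ z₁ : Fin k → I} (h : TrivOn p F K z₀) (hz₁ : z₁ ∈ K) : TrivOn p F K z₁ := by
  obtain ⟨Θ, Ξ, hΘc, hΞc, hΘp, hΞp, hΞΘ, hΘΞ⟩ := h
  refine ⟨fun z v => Θ z (Ξ z₁ v), fun z e => Θ z₁ (Ξ z e), ?_, ?_, ?_, ?_, ?_, ?_⟩
  · refine hΘc.comp (continuousOn_fst.prodMk (hΞc.comp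
      ((continuous_const.prodMk continuous_snd).continuousOn) ?_)) ?_
    · exact fun q hq => ⟨hz₁, by simpa using hq.2⟩
    · exact fun q hq => ⟨hq.1, hΞp z₁ hz₁ q.2 (by simpa using hq.2)⟩
  · refine (hΘc.comp ((continuous_const.continuousOn.prodMk hΞc)) ?_ : ContinuousOn _ _)
    exact fun q hq => ⟨hz₁, hΞp q.1 hq.1 q.2 hq.2⟩
  · exact fun z hz e he => hΘp z hz _ (hΞp z₁ hz₁ e he)
  · exact fun z hz e he => hΘp z₁ hz₁ _ (hΞp z hz e he)
  · intro z hz v hv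
    show Θ z₁ (Ξ z (Θ z (Ξ z₁ v))) = v
    rw [hΞΘ z hz _ (hΞp z₁ hz₁ v hv), hΘΞ z₁ hz₁ v hv]
  · intro z hz e he
    show Θ z (Ξ z₁ (Θ z₁ (Ξ z e))) = e
    rw [hΞΘ z₁ hz₁ _ (hΞp z hz e he), hΘΞ z hz e he]

theorem TrivOn.glue {p : X → Y} {k : ℕ} {F : (Fin k → I) → Y} {K₁ K₂ : Set (Fin k → I)}
    {z₀ z₁ : Fin k → I} (h₁c : IsClosed K₁) (h₂c : IsClosed K₂)
    {r : (Fin k → I) → (Fin k → I)} (hr : Continuous r)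
    (hrK : ∀ z ∈ K₂, r z ∈ K₁ ∩ K₂) (hrid : ∀ z ∈ K₁ ∩ K₂, r z = z)
    (h₁ : TrivOn p F K₁ z₀) (h₂ : TrivOn p F K₂ z₁) : TrivOn p F (K₁ ∪ K₂) z₀ := by
  classical
  obtain ⟨Θ₁, Ξ₁, hΘc₁, hΞc₁, hΘp₁, hΞp₁, hΞΘ₁, hΘΞ₁⟩ := h₁
  obtain ⟨Θ₂, Ξ₂, hΘc₂, hΞc₂, hΘp₂, hΞp₂, hΞΘ₂, hΘΞ₂⟩ := h₂
  set C₁ : Set ((Fin k → I) × X) := {q | q.1 ∈ K₁} with hC₁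
  set C₂ : Set ((Fin k → I) × X) := {q | q.1 ∈ K₂} with hC₂
  have hC₁c : IsClosed C₁ := h₁c.preimage continuous_fst
  have hC₂c : IsClosed C₂ := h₂c.preimage continuous_fst
  set ΘB : (Fin k → I) × X → X := C₁.piecewise (fun q => Θ₁ q.1 q.2)
    (fun q => Θ₂ q.1 (Ξ₂ (r q.1) (Θ₁ (r q.1) q.2))) with hΘB
  set ΞB : (Fin k → I) × X → X := C₁.piecewise (fun q => Ξ₁ q.1 q.2)
    (fun q => Ξ₁ (r q.1) (Θ₂ (r q.1) (Ξ₂ q.1 q.2))) with hΞB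
  have hmem₁ : ∀ z : Fin k → I, ∀ e : X, z ∈ K₁ → (z, e) ∈ C₁ := fun z e hz => hz
  have hΘB_of_mem : ∀ z ∈ K₁, ∀ e : X, ΘB (z, e) = Θ₁ z e := by
    intro z hz e; rw [hΘB]; exact Set.piecewise_eq_of_mem _ _ _ (hmem₁ z e hz)
  have hΘB_of_nmem : ∀ (z : Fin k → I), z ∉ K₁ → ∀ e : X,
      ΘB (z, e) = Θ₂ z (Ξ₂ (r z) (Θ₁ (r z) e)) := by
    intro z hz e; rw [hΘB]; exact Set.piecewise_eq_of_notMem _ _ _ hz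
  have hΞB_of_mem : ∀ z ∈ K₁, ∀ e : X, ΞB (z, e) = Ξ₁ z e := by
    intro z hz e; rw [hΞB]; exact Set.piecewise_eq_of_mem _ _ _ (hmem₁ z e hz)
  have hΞB_of_nmem : ∀ (z : Fin k → I), z ∉ K₁ → ∀ e : X,
      ΞB (z, e) = Ξ₁ (r z) (Θ₂ (r z) (Ξ₂ z e)) := by
    intro z hz e; rw [hΞB]; exact Set.piecewise_eq_of_notMem _ _ _ hz
  refine ⟨fun z e => ΘB (z, e), fun z e => ΞB (z, e), ?_, ?_, ?_, ?_, ?_, ?_⟩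
  · -- continuity of Θ
    have : ContinuousOn ΘB ((K₁ ∪ K₂) ×ˢ {e | p e = F z₀}) := by
      refine pasteIf hC₁c hC₂c ?_ ?_ ?_ ?_
      · rintro ⟨z, e⟩ ⟨hz, -⟩
        rcases hz with hz | hz
        · exact Or.inl hz
        · exact Or.inr hz
      · exact hΘc₁.mono (fun q hq => ⟨hq.2, hq.1.2⟩)
      · -- the second piece
        have hrc : ContinuousOn (fun q : (Fin k → I) × X => (r q.1, q.2))
            (((K₁ ∪ K₂) ×ˢ {e | p e = F z₀}) ∩ C₂) :=
          ((hr.comp continuous_fst).prodMk continuous_snd).continuousOn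
        have c1 : ContinuousOn (fun q : (Fin k → I) × X => Θ₁ (r q.1) q.2)
            (((K₁ ∪ K₂) ×ˢ {e | p e = F z₀}) ∩ C₂) := by
          refine hΘc₁.comp hrc ?_
          rintro ⟨z, e⟩ ⟨⟨-, he⟩, hz2⟩
          exact ⟨(hrK z hz2).1, he⟩
        have c2 : ContinuousOn (fun q : (Fin k → I) × X => Ξ₂ (r q.1) (Θ₁ (r q.1) q.2))
            (((K₁ ∪ K₂) ×ˢ {e | p e = F z₀}) ∩ C₂) := by
          refine hΞc₂.comp (((hr.comp continuous_fst).continuousOn).prodMk c1) ?_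
          rintro ⟨z, e⟩ ⟨⟨-, he⟩, hz2⟩
          exact ⟨(hrK z hz2).2, hΘp₁ _ (hrK z hz2).1 e he⟩
        refine hΘc₂.comp (continuousOn_fst.prodMk c2) ?_
        rintro ⟨z, e⟩ ⟨⟨-, he⟩, hz2⟩
        exact ⟨hz2, hΞp₂ _ (hrK z hz2).2 _ (hΘp₁ _ (hrK z hz2).1 e he)⟩
      · rintro ⟨z, e⟩ ⟨⟨⟨-, he⟩, hz1⟩, hz2⟩
        have hrz : r z = z := hrid z ⟨hz1, hz2⟩
        show Θ₁ z e = Θ₂ z (Ξ₂ (r z) (Θ₁ (r z) e))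
        rw [hrz, hΘΞ₂ z hz2 _ (hΘp₁ z hz1 e he)]
    exact this.congr (fun q hq => rfl)
  · -- continuity of Ξ
    have : ContinuousOn ΞB {q : (Fin k → I) × X | q.1 ∈ K₁ ∪ K₂ ∧ p q.2 = F q.1} := by
      refine pasteIf hC₁c hC₂c ?_ ?_ ?_ ?_
      · rintro ⟨z, e⟩ ⟨hz, -⟩
        rcases hz with hz | hz
        · exact Or.inl hz
        · exact Or.inr hz
      · exact hΞc₁.mono (fun q hq => ⟨hq.2, hq.1.2⟩)
      · have c1 : ContinuousOn (fun q : (Fin k → I) × X => Ξ₂ q.1 q.2)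
            ({q : (Fin k → I) × X | q.1 ∈ K₁ ∪ K₂ ∧ p q.2 = F q.1} ∩ C₂) :=
          hΞc₂.mono (fun q hq => ⟨hq.2, hq.1.2⟩)
        have c2 : ContinuousOn (fun q : (Fin k → I) × X => Θ₂ (r q.1) (Ξ₂ q.1 q.2))
            ({q : (Fin k → I) × X | q.1 ∈ K₁ ∪ K₂ ∧ p q.2 = F q.1} ∩ C₂) := by
          refine hΘc₂.comp (((hr.comp continuous_fst).continuousOn).prodMk c1) ?_
          rintro ⟨z, e⟩ ⟨⟨-, he⟩, hz2⟩
          exact ⟨(hrK z hz2).2, hΞp₂ z hz2 e he⟩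
        have c3 : ContinuousOn (fun q : (Fin k → I) × X =>
            Ξ₁ (r q.1) (Θ₂ (r q.1) (Ξ₂ q.1 q.2)))
            ({q : (Fin k → I) × X | q.1 ∈ K₁ ∪ K₂ ∧ p q.2 = F q.1} ∩ C₂) := by
          refine hΞc₁.comp (((hr.comp continuous_fst).continuousOn).prodMk c2) ?_
          rintro ⟨z, e⟩ ⟨⟨-, he⟩, hz2⟩
          exact ⟨(hrK z hz2).1, hΘp₂ _ (hrK z hz2).2 _ (hΞp₂ z hz2 e he)⟩
        exact c3
      · rintro ⟨z, e⟩ ⟨⟨⟨-, he⟩, hz1⟩, hz2⟩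
        have hrz : r z = z := hrid z ⟨hz1, hz2⟩
        show Ξ₁ z e = Ξ₁ (r z) (Θ₂ (r z) (Ξ₂ z e))
        rw [hrz, hΘΞ₂ z hz2 e he]
    exact this.congr (fun q hq => rfl)
  · intro z hz e he
    beta_reduce
    by_cases hz1 : z ∈ K₁
    · rw [hΘB_of_mem z hz1 e]; exact hΘp₁ z hz1 e he
    · have hz2 : z ∈ K₂ := hz.resolve_left hz1
      rw [hΘB_of_nmem z hz1 e]
      exact hΘp₂ z hz2 _ (hΞp₂ _ (hrK z hz2).2 _ (hΘp₁ _ (hrK z hz2).1 e he))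
  · intro z hz e he
    beta_reduce
    by_cases hz1 : z ∈ K₁
    · rw [hΞB_of_mem z hz1 e]; exact hΞp₁ z hz1 e he
    · have hz2 : z ∈ K₂ := hz.resolve_left hz1
      rw [hΞB_of_nmem z hz1 e]
      exact hΞp₁ _ (hrK z hz2).1 _ (hΘp₂ _ (hrK z hz2).2 _ (hΞp₂ z hz2 e he))
  · intro z hz e he
    beta_reduce
    by_cases hz1 : z ∈ K₁
    · rw [hΘB_of_mem z hz1 e, hΞB_of_mem z hz1 _]; exact hΞΘ₁ z hz1 e he
    · have hz2 : z ∈ K₂ := hz.resolve_left hz1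
      rw [hΘB_of_nmem z hz1 e, hΞB_of_nmem z hz1 _]
      rw [hΞΘ₂ z hz2 _ (hΞp₂ _ (hrK z hz2).2 _ (hΘp₁ _ (hrK z hz2).1 e he))]
      rw [hΘΞ₂ _ (hrK z hz2).2 _ (hΘp₁ _ (hrK z hz2).1 e he)]
      rw [hΞΘ₁ _ (hrK z hz2).1 e he]
  · intro z hz e he
    beta_reduce
    by_cases hz1 : z ∈ K₁
    · rw [hΞB_of_mem z hz1 e, hΘB_of_mem z hz1 _]; exact hΘΞ₁ z hz1 e he
    · have hz2 : z ∈ K₂ := hz.resolve_left hz1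
      rw [hΞB_of_nmem z hz1 e, hΘB_of_nmem z hz1 _]
      rw [hΘΞ₁ _ (hrK z hz2).1 _ (hΘp₂ _ (hrK z hz2).2 _ (hΞp₂ z hz2 e he))]
      rw [hΞΘ₂ _ (hrK z hz2).2 _ (hΞp₂ z hz2 e he)]
      rw [hΘΞ₂ z hz2 e he]

/-- Axis-aligned boxes in the cube. -/
def Box {k : ℕ} (a b : Fin k → ℝ) : Set (Fin k → I) :=
  {z | ∀ i, a i ≤ (z i : ℝ) ∧ (z i : ℝ) ≤ b i}

theorem isClosed_box {k : ℕ} (a b : Fin k → ℝ) : IsClosed (Box a b) := by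
  have h : Box a b = ⋂ i, ((fun z : Fin k → I => (z i : ℝ)) ⁻¹' Icc (a i) (b i)) := by
    ext z; simp [Box, mem_iInter, mem_Icc]
  rw [h]
  exact isClosed_iInter fun i =>
    IsClosed.preimage (continuous_subtype_val.comp (continuous_apply i)) isClosed_Icc

/-- `p` admits continuous local transports (local two-point trivializations with cocycle). -/
def LocallyTransported (p : X → Y) : Prop :=
  ∀ y₀ : Y, ∃ U : Set Y, IsOpen U ∧ y₀ ∈ U ∧ ∃ Φ : Y → Y → X → X,
    ContinuousOn (fun q : (Y × Y) × X => Φ q.1.1 q.1.2 q.2) ((U ×ˢ U) ×ˢ (univ : Set X)) ∧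
    (∀ c ∈ U, ∀ e, Φ c c e = e) ∧
    (∀ c ∈ U, ∀ c' ∈ U, ∀ c'' ∈ U, ∀ e, Φ c' c'' (Φ c c' e) = Φ c c'' e) ∧
    (∀ c ∈ U, ∀ c' ∈ U, ∀ e, p e = c → p (Φ c c' e) = c')

theorem trivOn_univ (p : X → Y) {k : ℕ} (F : C((Fin k → I), Y))
    (hLT : LocallyTransported p) : ∃ z₀, TrivOn p F univ z₀ := by
  classical
  choose U hUo hUm Φ hΦc hΦid hΦco hΦp using hLT
  obtain ⟨δ, hδ0, hδ⟩ := lebesgue_number_lemma_of_metric (s := (univ : Set (Fin k → I)))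
      (c := fun y : Y => F ⁻¹' U y) isCompact_univ
      (fun y => (hUo y).preimage F.continuous)
      (fun z _ => mem_iUnion.mpr ⟨F z, mem_preimage.mpr (hUm (F z))⟩)
  obtain ⟨n0, hn0⟩ := exists_nat_one_div_lt hδ0
  set N : ℕ := n0 + 1 with hNdef
  have hN0 : 0 < (N : ℝ) := by positivity
  have hNδ : 1 / (N : ℝ) < δ := by exact_mod_cast hn0
  -- base case : small boxes
  have base : ∀ a b : Fin k → ℝ, (∀ i, b i - a i ≤ 1 / N) →
      ∀ z₀ ∈ Box a b, TrivOn p F (Box a b) z₀ := by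
    intro a b hsmall z₀ hz₀
    obtain ⟨y, hy⟩ := hδ z₀ (mem_univ _)
    have hsub : Box a b ⊆ F ⁻¹' U y := by
      intro z hz
      apply hy
      rw [Metric.mem_ball]
      calc dist z z₀ ≤ 1 / N := by
            rw [dist_pi_le_iff (by positivity)]
            intro i
            rw [Subtype.dist_eq, Real.dist_eq, abs_le]
            have h1 := hz i; have h2 := hz₀ i; have h3 := hsmall i
            constructor <;> linarith [h1.1, h1.2, h2.1, h2.2]
        _ < δ := hNδ
    refine ⟨fun z e => Φ y (F z₀) (F z) e, fun z e => Φ y (F z) (F z₀) e, ?_, ?_, ?_, ?_, ?_, ?_⟩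
    · refine (hΦc y).comp (((continuous_const.prodMk
        (F.continuous.comp continuous_fst)).prodMk continuous_snd).continuousOn) ?_
      rintro ⟨z, e⟩ ⟨hz, -⟩
      exact ⟨⟨hsub hz₀, hsub hz⟩, mem_univ _⟩
    · refine (hΦc y).comp ((((F.continuous.comp continuous_fst).prodMk
        continuous_const).prodMk continuous_snd).continuousOn) ?_
      rintro ⟨z, e⟩ ⟨hz, -⟩
      exact ⟨⟨hsub hz, hsub hz₀⟩, mem_univ _⟩
    · exact fun z hz e he => hΦp y _ (hsub hz₀) _ (hsub hz) e he
    · exact fun z hz e he => hΦp y _ (hsub hz) _ (hsub hz₀) e he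
    · intro z hz e he
      show Φ y (F z) (F z₀) (Φ y (F z₀) (F z) e) = e
      rw [hΦco y _ (hsub hz₀) _ (hsub hz) _ (hsub hz₀) e, hΦid y _ (hsub hz₀) e]
    · intro z hz e he
      show Φ y (F z₀) (F z) (Φ y (F z) (F z₀) e) = e
      rw [hΦco y _ (hsub hz) _ (hsub hz₀) _ (hsub hz) e, hΦid y _ (hsub hz) e]
  -- main induction on the number of "full" axes
  have main : ∀ d : ℕ, d ≤ k → ∀ a b : Fin k → ℝ,
      (∀ i : Fin k, (i : ℕ) < d → a i = 0 ∧ b i = 1) →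
      (∀ i : Fin k, d ≤ (i : ℕ) → b i - a i ≤ 1 / N) →
      ∀ z₀ ∈ Box a b, TrivOn p F (Box a b) z₀ := by
    intro d
    induction d with
    | zero => intro _ a b _ hs; exact base a b (fun i => hs i (Nat.zero_le _))
    | succ d ih =>
      intro hdk a b hfull hsmall
      have hd_k : d < k := hdk
      set i₀ : Fin k := ⟨d, hd_k⟩ with hi₀
      have hii₀ : (i₀ : ℕ) = d := rfl
      have ha₀ : a i₀ = 0 := (hfull i₀ (by omega)).1
      have hb₀ : b i₀ = 1 := (hfull i₀ (by omega)).2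
      have hne_of_lt : ∀ i : Fin k, (i : ℕ) < d → i ≠ i₀ := by
        intro i hi hE; rw [hE] at hi; omega
      have hge_of_ne : ∀ i : Fin k, d ≤ (i : ℕ) → i ≠ i₀ → d + 1 ≤ (i : ℕ) := by
        intro i hi hne
        rcases Nat.lt_or_ge (i : ℕ) (d+1) with h | h
        · exact absurd (Fin.val_injective (show (i:ℕ) = (i₀:ℕ) by omega)) hne
        · exact h
      have inner : ∀ j : ℕ, 1 ≤ j → j ≤ N →
          ∀ z₀ ∈ Box a (Function.update b i₀ ((j : ℝ) / N)),
            TrivOn p F (Box a (Function.update b i₀ ((j : ℝ) / N))) z₀ := by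
        intro j
        induction j with
        | zero => intro h1; exact absurd h1 (by omega)
        | succ j ihj =>
          intro h1 hjN z₀ hz₀
          have hcast : ((j + 1 : ℕ) : ℝ) = (j : ℝ) + 1 := by push_cast; ring
          rw [hcast] at hz₀ ⊢
          by_cases hj0 : j = 0
          · -- first slab : use the `d` induction hypothesis directly
            subst hj0
            rw [show ((0:ℕ):ℝ) + 1 = 1 from by norm_num] at hz₀ ⊢
            refine ih (le_of_lt hd_k) a (Function.update b i₀ ((1:ℝ)/N)) ?_ ?_ z₀ hz₀
            · intro i hi
              rw [Function.update_of_ne (hne_of_lt i hi)]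
              exact hfull i (by omega)
            · intro i hi
              by_cases hii : i = i₀
              · subst hii; rw [Function.update_self, ha₀]; norm_num
              · rw [Function.update_of_ne hii]
                exact hsmall i (hge_of_ne i hi hii)
          · have hj1 : 1 ≤ j := Nat.one_le_iff_ne_zero.mpr hj0
            set t : ℝ := (j : ℝ) / N with ht
            have ht0 : 0 ≤ t := by positivity
            have ht1 : t ≤ 1 := by
              rw [ht, div_le_one hN0]; exact_mod_cast Nat.le_of_succ_le hjN
            have htt : t ≤ ((j : ℝ) + 1) / N := by
              rw [ht]; exact (div_le_div_iff_of_pos_right hN0).mpr (by linarith)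
            set K : Set (Fin k → I) := Box a (Function.update b i₀ t) with hKdef
            set slab : Set (Fin k → I) :=
              Box (Function.update a i₀ t) (Function.update b i₀ (((j : ℝ) + 1) / N))
              with hslabdef
            have hKtriv : ∀ z ∈ K, TrivOn p F K z := ihj hj1 (by omega)
            have hslabTriv : ∀ z ∈ slab, TrivOn p F slab z := by
              refine ih (le_of_lt hd_k) _ _ ?_ ?_
              · intro i hi
                rw [Function.update_of_ne (hne_of_lt i hi),
                  Function.update_of_ne (hne_of_lt i hi)]
                exact hfull i (by omega)
              · intro i hi
                by_cases hii : i = i₀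
                · subst hii
                  rw [Function.update_self, Function.update_self]
                  have : ((j : ℝ) + 1) / N - t = 1 / N := by rw [ht]; ring
                  exact le_of_eq this
                · rw [Function.update_of_ne hii, Function.update_of_ne hii]
                  exact hsmall i (hge_of_ne i hi hii)
            have hunion : Box a (Function.update b i₀ (((j : ℝ) + 1) / N)) = K ∪ slab := by
              ext z
              constructor
              · intro hz
                rcases le_total ((z i₀ : ℝ)) t with hle | hge
                · left
                  intro i
                  by_cases hii : i = i₀
                  · subst hii
                    exact ⟨(hz i₀).1, by rw [Function.update_self]; exact hle⟩
                  · refine ⟨(hz i).1, ?_⟩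
                    rw [Function.update_of_ne hii]
                    have := (hz i).2; rwa [Function.update_of_ne hii] at this
                · right
                  intro i
                  by_cases hii : i = i₀
                  · subst hii
                    rw [Function.update_self, Function.update_self]
                    have := (hz i₀).2; rw [Function.update_self] at this
                    exact ⟨hge, this⟩
                  · rw [Function.update_of_ne hii, Function.update_of_ne hii]
                    have := (hz i).2; rw [Function.update_of_ne hii] at this
                    exact ⟨(hz i).1, this⟩
              · intro hz
                rcases hz with hz | hz
                · intro i
                  by_cases hii : i = i₀
                  · subst hii
                    have := (hz i₀).2; rw [Function.update_self] at this
                    rw [Function.update_self]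
                    exact ⟨(hz i₀).1, le_trans this htt⟩
                  · rw [Function.update_of_ne hii]
                    have := (hz i).2; rw [Function.update_of_ne hii] at this
                    exact ⟨(hz i).1, this⟩
                · intro i
                  by_cases hii : i = i₀
                  · subst hii
                    rw [Function.update_self]
                    have h2 := (hz i₀).2; rw [Function.update_self] at h2
                    exact ⟨by rw [ha₀]; exact (z i₀).2.1, h2⟩
                  · rw [Function.update_of_ne hii]
                    have h1 := (hz i).1; rw [Function.update_of_ne hii] at h1
                    have h2 := (hz i).2; rw [Function.update_of_ne hii] at h2
                    exact ⟨h1, h2⟩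
            rw [hunion] at hz₀ ⊢
            rcases Set.eq_empty_or_nonempty K with hKe | ⟨zK, hzK⟩
            · rw [hKe, empty_union] at hz₀ ⊢
              exact hslabTriv z₀ hz₀
            · -- `slab` contains a point as well
              set tI : I := ⟨t, ht0, ht1⟩ with htI
              have hzS_mem : (fun i => if i = i₀ then tI else zK i) ∈ slab := by
                intro i
                by_cases hii : i = i₀
                · subst hii
                  simp only [if_pos rfl]
                  rw [Function.update_self, Function.update_self]
                  exact ⟨le_refl _, htt⟩
                · simp only [if_neg hii]
                  rw [Function.update_of_ne hii, Function.update_of_ne hii]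
                  have h1 := (hzK i).1
                  have h2 := (hzK i).2; rw [Function.update_of_ne hii] at h2
                  exact ⟨h1, h2⟩
              -- the retraction
              set rf : (Fin k → I) → (Fin k → I) := fun z i =>
                if i = i₀ then ⟨min (z i₀ : ℝ) t, le_min (z i₀).2.1 ht0,
                  le_trans (min_le_right _ _) ht1⟩ else z i with hrf
              have hrc : Continuous rf := by
                refine continuous_pi fun i => ?_
                by_cases hii : i = i₀
                · subst hii
                  simp only [hrf, if_pos rfl]
                  exact Continuous.subtype_mk
                    ((continuous_subtype_val.comp (continuous_apply i₀)).min
                      continuous_const) _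
                · simp only [hrf, if_neg hii]
                  exact continuous_apply i
              have hrK : ∀ z ∈ slab, rf z ∈ K ∩ slab := by
                intro z hz
                have hzt : t ≤ (z i₀ : ℝ) := by
                  have := (hz i₀).1; rwa [Function.update_self] at this
                have hri₀ : ((rf z i₀ : I) : ℝ) = t := by
                  simp only [hrf, if_pos rfl]
                  exact min_eq_right hzt
                constructor
                · intro i
                  by_cases hii : i = i₀
                  · subst hii
                    rw [hri₀, Function.update_self]
                    exact ⟨by rw [ha₀]; exact ht0, le_refl _⟩
                  · simp only [hrf, if_neg hii]
                    rw [Function.update_of_ne hii]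
                    have h1 := (hz i).1; rw [Function.update_of_ne hii] at h1
                    have h2 := (hz i).2; rw [Function.update_of_ne hii] at h2
                    exact ⟨h1, h2⟩
                · intro i
                  by_cases hii : i = i₀
                  · subst hii
                    rw [hri₀, Function.update_self, Function.update_self]
                    exact ⟨le_refl _, htt⟩
                  · simp only [hrf, if_neg hii]
                    exact hz i
              have hrid : ∀ z ∈ K ∩ slab, rf z = z := by
                intro z hz
                have h1 : (z i₀ : ℝ) ≤ t := by
                  have := (hz.1 i₀).2; rwa [Function.update_self] at this
                funext i
                by_cases hii : i = i₀
                · subst hii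
                  simp only [hrf, if_pos rfl]
                  exact Subtype.ext (min_eq_left h1)
                · simp only [hrf, if_neg hii]
              have hglue := TrivOn.glue (isClosed_box _ _) (isClosed_box _ _) hrc hrK hrid
                (hKtriv zK hzK) (hslabTriv _ hzS_mem)
              exact hglue.transfer hz₀
      -- conclude the outer induction step
      have hupdate : Function.update b i₀ ((N : ℝ) / N) = b := by
        rw [div_self (ne_of_gt hN0), ← hb₀]
        exact Function.update_eq_self i₀ b
      intro z₀ hz₀
      have := inner N (by omega) le_rfl z₀ (by rwa [hupdate])
      rwa [hupdate] at this
  have huniv : Box (fun _ : Fin k => (0:ℝ)) (fun _ => 1) = univ := by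
    ext z
    simp only [Box, mem_setOf_eq, mem_univ, iff_true]
    exact fun i => ⟨(z i).2.1, (z i).2.2⟩
  have := main k le_rfl (fun _ => 0) (fun _ => 1) (fun i _ => ⟨rfl, rfl⟩)
      (fun i hi => absurd i.isLt (by omega))
  rw [huniv] at this
  exact ⟨fun _ => 0, this (fun _ => 0) (mem_univ _)⟩

/-- Main abstract theorem: a locally transported map is a Serre fibration. -/
theorem isSerreFibration_of_locallyTransported (p : X → Y) (hLT : LocallyTransported p) :
    IsSerreFibration p := by
  intro m F f₀ hf₀
  -- re-coordinatize the cube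
  set fwd : (Fin m → I) × I → (Fin (m+1) → I) := fun qt => Fin.cons qt.2 qt.1 with hfwd
  have hfwdc : Continuous fwd := by
    refine continuous_pi fun i => ?_
    refine Fin.cases ?_ (fun j => ?_) i
    · simpa [hfwd] using continuous_snd
    · simpa [hfwd, Function.comp_def] using (continuous_apply j).comp continuous_fst
  set F' : C((Fin (m+1) → I), Y) :=
    ⟨fun z => F ((fun i => z i.succ, z 0)),
      F.continuous.comp ((continuous_pi fun i => continuous_apply _).prodMk
        (continuous_apply 0))⟩ with hF'
  obtain ⟨z₀, Θ, Ξ, hΘc, hΞc, hΘp, hΞp, hΞΘ, hΘΞ⟩ := trivOn_univ p F' hLT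
  have hF'fwd : ∀ qt : (Fin m → I) × I, F' (fwd qt) = F qt := by
    rintro ⟨q, s⟩
    simp only [hF', hfwd, ContinuousMap.coe_mk, Fin.cons_succ, Fin.cons_zero]
  have hg : Continuous (fun q : Fin m → I => Ξ (fwd (q, 0)) (f₀ q)) := by
    rw [← continuousOn_univ]
    have hcont : Continuous (fun q : Fin m → I => (fwd (q, 0), f₀ q)) :=
      (hfwdc.comp (continuous_id.prodMk continuous_const)).prodMk f₀.continuous
    have hmap : MapsTo (fun q : Fin m → I => (fwd (q, 0), f₀ q)) univ
        {q : (Fin (m+1) → I) × X | q.1 ∈ univ ∧ p q.2 = F' q.1} := by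
      intro q _; exact ⟨mem_univ _, by rw [hF'fwd]; exact hf₀ q⟩
    exact hΞc.comp hcont.continuousOn hmap
  have hGc : Continuous (fun qt : (Fin m → I) × I =>
      Θ (fwd qt) (Ξ (fwd (qt.1, 0)) (f₀ qt.1))) := by
    rw [← continuousOn_univ]
    have hcont : Continuous (fun qt : (Fin m → I) × I =>
        (fwd qt, Ξ (fwd (qt.1, 0)) (f₀ qt.1))) :=
      hfwdc.prodMk (hg.comp continuous_fst)
    have hmap : MapsTo (fun qt : (Fin m → I) × I =>
        (fwd qt, Ξ (fwd (qt.1, 0)) (f₀ qt.1))) univ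
        ((univ : Set (Fin (m+1) → I)) ×ˢ {e | p e = F' z₀}) := by
      intro qt _
      refine ⟨mem_univ _, ?_⟩
      exact hΞp (fwd (qt.1, 0)) (mem_univ _) (f₀ qt.1) (by rw [hF'fwd]; exact hf₀ qt.1)
    exact hΘc.comp hcont.continuousOn hmap
  refine ⟨⟨fun qt => Θ (fwd qt) (Ξ (fwd (qt.1, 0)) (f₀ qt.1)), hGc⟩, ?_, ?_⟩
  · intro q
    simp only [ContinuousMap.coe_mk]
    exact hΘΞ (fwd (q, 0)) (mem_univ _) (f₀ q) (by rw [hF'fwd]; exact hf₀ q)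
  · intro z
    simp only [ContinuousMap.coe_mk]
    rw [← hF'fwd z]
    exact hΘp (fwd z) (mem_univ _) _
      (hΞp (fwd (z.1, 0)) (mem_univ _) (f₀ z.1) (by rw [hF'fwd]; exact hf₀ z.1))


end

open Metric

noncomputable section PushSec

variable {E : Type*} [NormedAddCommGroup E] [NormedSpace ℝ E] [CompleteSpace E]

/-- bump profile -/
def lam (x₀ : E) (r : ℝ) (y : E) : ℝ := max 0 (1 - dist y x₀ / r)

lemma lam_nonneg (x₀ : E) (r : ℝ) (y : E) : 0 ≤ lam x₀ r y := le_max_left _ _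

lemma lam_le_one {r : ℝ} (hr : 0 < r) (x₀ y : E) : lam x₀ r y ≤ 1 := by
  apply max_le zero_le_one
  have : 0 ≤ dist y x₀ / r := by positivity
  linarith

lemma lam_lipschitz {r : ℝ} (hr : 0 < r) (x₀ y y' : E) :
    |lam x₀ r y - lam x₀ r y'| ≤ dist y y' / r := by
  have h := abs_max_sub_max_le_abs (1 - dist y x₀ / r) (1 - dist y' x₀ / r) 0
  rw [max_comm (1 - dist y x₀ / r) 0, max_comm (1 - dist y' x₀ / r) 0] at h
  refine le_trans h ?_
  have h2 : (1 - dist y x₀ / r) - (1 - dist y' x₀ / r) = (dist y' x₀ - dist y x₀)/r := by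
    ring
  rw [h2, abs_div, abs_of_pos hr]
  gcongr
  rw [abs_sub_comm]
  exact abs_dist_sub_le y y' x₀

lemma lam_center' {r : ℝ} (hr : 0 < r) (x₀ : E) : lam x₀ r x₀ = 1 := by
  simp [lam, dist_self]

lemma lam_eq_zero {r : ℝ} (hr : 0 < r) {x₀ y : E} (h : r ≤ dist y x₀) : lam x₀ r y = 0 := by
  apply max_eq_left
  have : 1 ≤ dist y x₀ / r := (one_le_div hr).mpr h
  linarith

lemma lam_eq {r : ℝ} (hr : 0 < r) {x₀ y : E} (h : dist y x₀ ≤ r) :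
    lam x₀ r y = 1 - dist y x₀ / r := by
  apply max_eq_right
  have : dist y x₀ / r ≤ 1 := (div_le_one hr).mpr h
  linarith

/-- the push map -/
def pushF (x₀ : E) (r : ℝ) (a y : E) : E := y + lam x₀ r y • a

lemma continuous_lam (x₀ : E) (r : ℝ) : Continuous (lam x₀ r) :=
  continuous_const.max (continuous_const.sub ((continuous_id.dist continuous_const).div_const r))

lemma continuous_pushF (x₀ : E) (r : ℝ) :
    Continuous (fun q : E × E => pushF x₀ r q.1 q.2) := by
  exact continuous_snd.add (((continuous_lam x₀ r).comp continuous_snd).smul continuous_fst)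

lemma pushF_eq_self {r : ℝ} (hr : 0 < r) {x₀ y : E} (a : E) (h : r ≤ dist y x₀) :
    pushF x₀ r a y = y := by
  rw [pushF, lam_eq_zero hr h, zero_smul, add_zero]

lemma pushF_center {r : ℝ} (hr : 0 < r) (x₀ a : E) : pushF x₀ r a x₀ = x₀ + a := by
  rw [pushF, lam_center' hr, one_smul]

lemma dist_pushF_self {r : ℝ} (hr : 0 < r) (x₀ a y : E) : dist (pushF x₀ r a y) y ≤ ‖a‖ := by
  rw [pushF, dist_eq_norm, add_sub_cancel_left, norm_smul, Real.norm_eq_abs,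
    abs_of_nonneg (lam_nonneg x₀ r y)]
  calc lam x₀ r y * ‖a‖ ≤ 1 * ‖a‖ := by
        apply mul_le_mul_of_nonneg_right (lam_le_one hr x₀ y) (norm_nonneg a)
    _ = ‖a‖ := one_mul _

lemma pushF_mem_closedBall {r : ℝ} (hr : 0 < r) {x₀ a y : E} (ha : ‖a‖ ≤ r)
    (hy : dist y x₀ ≤ r) : dist (pushF x₀ r a y) x₀ ≤ r := by
  have h1 : dist (pushF x₀ r a y) x₀ ≤ dist y x₀ + lam x₀ r y * ‖a‖ := by
    calc dist (pushF x₀ r a y) x₀ ≤ dist (pushF x₀ r a y) y + dist y x₀ := dist_triangle _ _ _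
      _ ≤ lam x₀ r y * ‖a‖ + dist y x₀ := by
          gcongr
          rw [pushF, dist_eq_norm, add_sub_cancel_left, norm_smul, Real.norm_eq_abs,
            abs_of_nonneg (lam_nonneg x₀ r y)]
      _ = dist y x₀ + lam x₀ r y * ‖a‖ := by ring
  have h2 : lam x₀ r y * ‖a‖ ≤ (1 - dist y x₀ / r) * r := by
    rw [lam_eq hr hy]
    have h3 : 0 ≤ 1 - dist y x₀ / r := by
      have : dist y x₀ / r ≤ 1 := (div_le_one hr).mpr hy
      linarith
    exact mul_le_mul_of_nonneg_left ha h3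
  have h4 : (1 - dist y x₀ / r) * r = r - dist y x₀ := by
    field_simp
  linarith

lemma dist_pushF_ge {r : ℝ} (hr : 0 < r) (x₀ a y y' : E) :
    dist y y' - (‖a‖ / r) * dist y y' ≤ dist (pushF x₀ r a y) (pushF x₀ r a y') := by
  have key : dist y y' ≤ dist (pushF x₀ r a y) (pushF x₀ r a y')
      + |lam x₀ r y - lam x₀ r y'| * ‖a‖ := by
    have h1 : y - y' = (pushF x₀ r a y - pushF x₀ r a y')
        - (lam x₀ r y - lam x₀ r y') • a := by
      simp only [pushF, sub_smul]
      abel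
    calc dist y y' = ‖y - y'‖ := dist_eq_norm _ _
      _ = ‖(pushF x₀ r a y - pushF x₀ r a y') - (lam x₀ r y - lam x₀ r y') • a‖ := by
          rw [h1]
      _ ≤ ‖pushF x₀ r a y - pushF x₀ r a y'‖ + ‖(lam x₀ r y - lam x₀ r y') • a‖ :=
          norm_sub_le _ _
      _ = dist (pushF x₀ r a y) (pushF x₀ r a y') + |lam x₀ r y - lam x₀ r y'| * ‖a‖ := by
          rw [dist_eq_norm, norm_smul, Real.norm_eq_abs]
  have h2 : |lam x₀ r y - lam x₀ r y'| * ‖a‖ ≤ (dist y y' / r) * ‖a‖ :=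
    mul_le_mul_of_nonneg_right (lam_lipschitz hr x₀ y y') (norm_nonneg a)
  have h3 : (dist y y' / r) * ‖a‖ = (‖a‖ / r) * dist y y' := by ring
  linarith

lemma pushF_injective {r : ℝ} (hr : 0 < r) {a : E} (ha : ‖a‖ < r) (x₀ : E) :
    Function.Injective (pushF x₀ r a) := by
  intro y y' h
  have h1 := dist_pushF_ge hr x₀ a y y'
  rw [h, dist_self] at h1
  have h2 : dist y y' * (1 - ‖a‖ / r) ≤ 0 := by linarith
  have h3 : 0 < 1 - ‖a‖ / r := by
    have : ‖a‖ / r < 1 := (div_lt_one hr).mpr ha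
    linarith
  have h4 : dist y y' ≤ 0 := nonpos_of_mul_nonpos_right (by linarith [h2]) h3
  exact dist_le_zero.mp h4

lemma contractingPush (x₀ : E) {r : ℝ} {a : E} (hr : 0 < r) (ha : ‖a‖ < r) (w : E) :
    ContractingWith ⟨‖a‖ / r, by positivity⟩ (fun y => w - lam x₀ r y • a) := by
  constructor
  · exact NNReal.coe_lt_one.mp ((div_lt_one hr).mpr ha)
  · apply LipschitzWith.of_dist_le_mul
    intro y y'
    show dist (w - lam x₀ r y • a) (w - lam x₀ r y' • a) ≤ ‖a‖ / r * dist y y'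
    rw [dist_eq_norm, sub_sub_sub_cancel_left, ← sub_smul, norm_smul, Real.norm_eq_abs]
    calc |lam x₀ r y' - lam x₀ r y| * ‖a‖ ≤ (dist y' y / r) * ‖a‖ :=
          mul_le_mul_of_nonneg_right (lam_lipschitz hr x₀ y' y) (norm_nonneg a)
      _ = ‖a‖ / r * dist y y' := by rw [dist_comm]; ring

/-- inverse of the push map -/
def pushInv (x₀ : E) (r : ℝ) (a w : E) : E :=
  if h : 0 < r ∧ ‖a‖ < r then
    ContractingWith.fixedPoint _ (contractingPush x₀ h.1 h.2 w)
  else w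

lemma pushF_pushInv {r : ℝ} (hr : 0 < r) {a : E} (ha : ‖a‖ < r) (x₀ w : E) :
    pushF x₀ r a (pushInv x₀ r a w) = w := by
  rw [pushInv, dif_pos ⟨hr, ha⟩]
  have h := (contractingPush x₀ hr ha w).fixedPoint_isFixedPt
  set y := ContractingWith.fixedPoint _ (contractingPush x₀ hr ha w)
  have h2 : w - lam x₀ r y • a = y := h
  rw [pushF]
  exact (sub_eq_iff_eq_add.mp h2).symm

lemma pushInv_pushF {r : ℝ} (hr : 0 < r) {a : E} (ha : ‖a‖ < r) (x₀ y : E) :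
    pushInv x₀ r a (pushF x₀ r a y) = y := by
  apply pushF_injective hr ha x₀
  rw [pushF_pushInv hr ha]

lemma pushInv_eq_self' {r : ℝ} (hr : 0 < r) {a : E} (ha : ‖a‖ < r) {x₀ w : E}
    (h : r ≤ dist w x₀) : pushInv x₀ r a w = w := by
  conv_lhs => rw [← pushF_eq_self hr a h]
  exact pushInv_pushF hr ha x₀ w

lemma pushInv_eq_self {r : ℝ} (hr : 0 < r) (a : E) {x₀ w : E}
    (h : r ≤ dist w x₀) : pushInv x₀ r a w = w := by
  by_cases ha : ‖a‖ < r
  · exact pushInv_eq_self' hr ha h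
  · rw [pushInv, dif_neg (fun hh => ha hh.2)]

lemma pushInv_mem_closedBall {r : ℝ} (hr : 0 < r) {a : E} (ha : ‖a‖ < r) {x₀ w : E}
    (hw : dist w x₀ ≤ r) : dist (pushInv x₀ r a w) x₀ ≤ r := by
  by_contra hcon
  push_neg at hcon
  have h1 : pushF x₀ r a (pushInv x₀ r a w) = pushInv x₀ r a w :=
    pushF_eq_self hr a (le_of_lt hcon)
  rw [pushF_pushInv hr ha] at h1
  rw [← h1] at hcon
  linarith

lemma pushF_mem_ball2 {r : ℝ} (hr : 0 < r) {a : E} (ha : ‖a‖ < r) {x₀ y : E}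
    (hy : dist y x₀ < 2 * r) : dist (pushF x₀ r a y) x₀ < 2 * r := by
  rcases le_or_gt (dist y x₀) r with h | h
  · have := pushF_mem_closedBall hr (le_of_lt ha) h
    linarith
  · rw [pushF_eq_self hr a (le_of_lt h)]
    exact hy

lemma pushInv_mem_ball2 {r : ℝ} (hr : 0 < r) {a : E} (ha : ‖a‖ < r) {x₀ w : E}
    (hw : dist w x₀ < 2 * r) : dist (pushInv x₀ r a w) x₀ < 2 * r := by
  rcases le_or_gt (dist w x₀) r with h | h
  · have := pushInv_mem_closedBall hr ha h
    linarith
  · rw [pushInv_eq_self hr a (le_of_lt h)]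
    exact hw

lemma pushInv_dist_bound {r : ℝ} (hr : 0 < r) {a a' : E} (ha : ‖a‖ < r) (ha' : ‖a'‖ < r)
    (x₀ w w' : E) :
    (1 - ‖a'‖ / r) * dist (pushInv x₀ r a w) (pushInv x₀ r a' w') ≤ dist w w' + ‖a - a'‖ := by
  set y := pushInv x₀ r a w with hy
  set y' := pushInv x₀ r a' w' with hy'
  have h1 : y + lam x₀ r y • a = w := pushF_pushInv hr ha x₀ w
  have h1' : y' + lam x₀ r y' • a' = w' := pushF_pushInv hr ha' x₀ w'
  have key : dist y y' ≤ dist w w' + ‖a - a'‖ + (‖a'‖ / r) * dist y y' := by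
    have hdecomp : y - y' = (w - w') - lam x₀ r y • (a - a')
        - (lam x₀ r y - lam x₀ r y') • a' := by
      rw [← h1, ← h1']
      simp only [smul_sub, sub_smul]
      abel
    calc dist y y' = ‖y - y'‖ := dist_eq_norm _ _
      _ = ‖(w - w') - lam x₀ r y • (a - a') - (lam x₀ r y - lam x₀ r y') • a'‖ := by
          rw [hdecomp]
      _ ≤ ‖(w - w') - lam x₀ r y • (a - a')‖ + ‖(lam x₀ r y - lam x₀ r y') • a'‖ :=
          norm_sub_le _ _
      _ ≤ ‖w - w'‖ + ‖lam x₀ r y • (a - a')‖ + ‖(lam x₀ r y - lam x₀ r y') • a'‖ := by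
          gcongr
          exact norm_sub_le _ _
      _ ≤ dist w w' + ‖a - a'‖ + (‖a'‖ / r) * dist y y' := by
          rw [dist_eq_norm]
          gcongr
          · rw [norm_smul, Real.norm_eq_abs, abs_of_nonneg (lam_nonneg x₀ r y)]
            calc lam x₀ r y * ‖a - a'‖ ≤ 1 * ‖a - a'‖ :=
                  mul_le_mul_of_nonneg_right (lam_le_one hr x₀ y) (norm_nonneg _)
              _ = ‖a - a'‖ := one_mul _
          · rw [norm_smul, Real.norm_eq_abs]
            calc |lam x₀ r y - lam x₀ r y'| * ‖a'‖ ≤ (dist y y' / r) * ‖a'‖ :=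
                  mul_le_mul_of_nonneg_right (lam_lipschitz hr x₀ y y') (norm_nonneg _)
              _ = ‖a'‖ / r * dist y y' := by ring
  nlinarith [dist_nonneg (x := y) (y := y')]

lemma continuousOn_pushInv (x₀ : E) {r : ℝ} (hr : 0 < r) :
    ContinuousOn (fun q : E × E => pushInv x₀ r q.1 q.2)
      ({a : E | ‖a‖ < r} ×ˢ (univ : Set E)) := by
  intro q hq
  apply ContinuousAt.continuousWithinAt
  obtain ⟨hq1, -⟩ := hq
  have hq1' : ‖q.1‖ < r := hq1
  rw [Metric.continuousAt_iff]
  intro ε hε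
  set c : ℝ := 1 - ‖q.1‖ / r with hc
  have hc0 : 0 < c := by
    have : ‖q.1‖ / r < 1 := (div_lt_one hr).mpr hq1'
    simp only [hc]; linarith
  refine ⟨min ((r - ‖q.1‖) / 2) (c * ε / 4), lt_min (by linarith) (by positivity), ?_⟩
  intro x hx
  have hd1 : dist x.1 q.1 < min ((r - ‖q.1‖) / 2) (c * ε / 4) :=
    lt_of_le_of_lt (by rw [Prod.dist_eq]; exact le_max_left _ _) hx
  have hd2 : dist x.2 q.2 < min ((r - ‖q.1‖) / 2) (c * ε / 4) :=
    lt_of_le_of_lt (by rw [Prod.dist_eq]; exact le_max_right _ _) hx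
  have hxa : ‖x.1‖ < r := by
    have h1 : ‖x.1‖ ≤ ‖q.1‖ + dist x.1 q.1 := by
      rw [dist_eq_norm]
      calc ‖x.1‖ = ‖q.1 + (x.1 - q.1)‖ := by congr 1; abel
        _ ≤ ‖q.1‖ + ‖x.1 - q.1‖ := norm_add_le _ _
    have h2 : dist x.1 q.1 < (r - ‖q.1‖) / 2 := lt_of_lt_of_le hd1 (min_le_left _ _)
    linarith
  have hb := pushInv_dist_bound hr hxa hq1' x₀ x.2 q.2
  have hnm : ‖x.1 - q.1‖ = dist x.1 q.1 := (dist_eq_norm _ _).symm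
  have h3 : dist x.1 q.1 < c * ε / 4 := lt_of_lt_of_le hd1 (min_le_right _ _)
  have h4 : dist x.2 q.2 < c * ε / 4 := lt_of_lt_of_le hd2 (min_le_right _ _)
  have h5 : c * dist (pushInv x₀ r x.1 x.2) (pushInv x₀ r q.1 q.2) ≤
      dist x.2 q.2 + ‖x.1 - q.1‖ := hb
  have h6 : c * dist (pushInv x₀ r x.1 x.2) (pushInv x₀ r q.1 q.2) < c * ε / 2 := by
    rw [hnm] at h5
    linarith
  have h7 : dist (pushInv x₀ r x.1 x.2) (pushInv x₀ r q.1 q.2) < ε / 2 := by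
    by_contra hcon
    push_neg at hcon
    have := mul_le_mul_of_nonneg_left hcon (le_of_lt hc0)
    linarith
  linarith [hε]

end PushSec

noncomputable section ChartPushSec

open scoped Classical

variable {E : Type*} [NormedAddCommGroup E] [NormedSpace ℝ E] [CompleteSpace E] [ProperSpace E]
variable {M : Type*} [TopologicalSpace M] [T2Space M]

/-- push inside a chart, extended by the identity -/
def cpF (ψ : OpenPartialHomeomorph M E) (x₀ : E) (r : ℝ) (a : E) (m : M) : M :=
  if m ∈ ψ.source ∧ dist (ψ m) x₀ < 2 * r then ψ.symm (pushF x₀ r a (ψ m)) else m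

def cpG (ψ : OpenPartialHomeomorph M E) (x₀ : E) (r : ℝ) (a : E) (m : M) : M :=
  if m ∈ ψ.source ∧ dist (ψ m) x₀ < 2 * r then ψ.symm (pushInv x₀ r a (ψ m)) else m

variable {ψ : OpenPartialHomeomorph M E} {x₀ : E} {r : ℝ}

lemma cpG_cpF (hr : 0 < r) (hball : closedBall x₀ (2*r) ⊆ ψ.target) {a : E} (ha : ‖a‖ < r)
    (m : M) : cpG ψ x₀ r a (cpF ψ x₀ r a m) = m := by
  by_cases h : m ∈ ψ.source ∧ dist (ψ m) x₀ < 2 * r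
  · rw [cpF, if_pos h]
    have hpm : dist (pushF x₀ r a (ψ m)) x₀ < 2 * r := pushF_mem_ball2 hr ha h.2
    have htgt : pushF x₀ r a (ψ m) ∈ ψ.target := hball (mem_closedBall.mpr (le_of_lt hpm))
    have hsrc' : ψ.symm (pushF x₀ r a (ψ m)) ∈ ψ.source := ψ.map_target htgt
    have hval : ψ (ψ.symm (pushF x₀ r a (ψ m))) = pushF x₀ r a (ψ m) := ψ.right_inv htgt
    rw [cpG, if_pos ⟨hsrc', by rw [hval]; exact hpm⟩, hval, pushInv_pushF hr ha,
      ψ.left_inv h.1]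
  · rw [cpF, if_neg h, cpG, if_neg h]

lemma cpF_cpG (hr : 0 < r) (hball : closedBall x₀ (2*r) ⊆ ψ.target) {a : E} (ha : ‖a‖ < r)
    (m : M) : cpF ψ x₀ r a (cpG ψ x₀ r a m) = m := by
  by_cases h : m ∈ ψ.source ∧ dist (ψ m) x₀ < 2 * r
  · rw [cpG, if_pos h]
    have hpm : dist (pushInv x₀ r a (ψ m)) x₀ < 2 * r := pushInv_mem_ball2 hr ha h.2
    have htgt : pushInv x₀ r a (ψ m) ∈ ψ.target := hball (mem_closedBall.mpr (le_of_lt hpm))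
    have hsrc' : ψ.symm (pushInv x₀ r a (ψ m)) ∈ ψ.source := ψ.map_target htgt
    have hval : ψ (ψ.symm (pushInv x₀ r a (ψ m))) = pushInv x₀ r a (ψ m) := ψ.right_inv htgt
    rw [cpF, if_pos ⟨hsrc', by rw [hval]; exact hpm⟩, hval, pushF_pushInv hr ha,
      ψ.left_inv h.1]
  · rw [cpG, if_neg h, cpF, if_neg h]

lemma mem_supp_iff (hr : 0 < r) (hball : closedBall x₀ (2*r) ⊆ ψ.target) (m : M) :
    m ∈ ψ.symm '' closedBall x₀ r ↔ m ∈ ψ.source ∧ dist (ψ m) x₀ ≤ r := by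
  constructor
  · rintro ⟨x, hx, rfl⟩
    have hxt : x ∈ ψ.target := hball (closedBall_subset_closedBall (by linarith) hx)
    exact ⟨ψ.map_target hxt, by rw [ψ.right_inv hxt]; exact hx⟩
  · rintro ⟨hm, hd⟩
    exact ⟨ψ m, mem_closedBall.mpr hd, ψ.left_inv hm⟩

lemma cpF_eq_self_of_far (hr : 0 < r) (hball : closedBall x₀ (2*r) ⊆ ψ.target) (a : E)
    {m : M} (h : m ∉ ψ.symm '' closedBall x₀ r) : cpF ψ x₀ r a m = m := by
  by_cases hc : m ∈ ψ.source ∧ dist (ψ m) x₀ < 2 * r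
  · have hfar : r ≤ dist (ψ m) x₀ := by
      by_contra hcon
      push_neg at hcon
      exact h ((mem_supp_iff hr hball m).mpr ⟨hc.1, le_of_lt hcon⟩)
    rw [cpF, if_pos hc, pushF_eq_self hr a hfar, ψ.left_inv hc.1]
  · rw [cpF, if_neg hc]

lemma cpG_eq_self_of_far (hr : 0 < r) (hball : closedBall x₀ (2*r) ⊆ ψ.target) (a : E)
    {m : M} (h : m ∉ ψ.symm '' closedBall x₀ r) : cpG ψ x₀ r a m = m := by
  by_cases hc : m ∈ ψ.source ∧ dist (ψ m) x₀ < 2 * r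
  · have hfar : r ≤ dist (ψ m) x₀ := by
      by_contra hcon
      push_neg at hcon
      exact h ((mem_supp_iff hr hball m).mpr ⟨hc.1, le_of_lt hcon⟩)
    rw [cpG, if_pos hc, pushInv_eq_self hr a hfar, ψ.left_inv hc.1]
  · rw [cpG, if_neg hc]

lemma cpF_center (hr : 0 < r) {a : E} {m : M} (hm : m ∈ ψ.source) (hx : ψ m = x₀) :
    cpF ψ x₀ r a m = ψ.symm (x₀ + a) := by
  rw [cpF, if_pos ⟨hm, by rw [hx, dist_self]; positivity⟩, hx, pushF_center hr]

lemma continuousOn_cpF (hr : 0 < r) (hball : closedBall x₀ (2*r) ⊆ ψ.target) :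
    ContinuousOn (fun q : E × M => cpF ψ x₀ r q.1 q.2)
      ({a : E | ‖a‖ < r} ×ˢ (univ : Set M)) := by
  intro q hq
  apply ContinuousAt.continuousWithinAt
  by_cases hm : q.2 ∈ ψ.source ∧ dist (ψ q.2) x₀ < 2 * r
  · -- inside the chart region
    have hO : IsOpen (ψ.source ∩ ψ ⁻¹' (ball x₀ (2*r))) :=
      ψ.isOpen_inter_preimage isOpen_ball
    have hev : ∀ᶠ p : E × M in 𝓝 q, cpF ψ x₀ r p.1 p.2 = ψ.symm (pushF x₀ r p.1 (ψ p.2)) := by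
      have hmem : Prod.snd ⁻¹' (ψ.source ∩ ψ ⁻¹' (ball x₀ (2*r))) ∈ 𝓝 q :=
        (hO.preimage continuous_snd).mem_nhds (by exact ⟨hm.1, mem_ball.mpr hm.2⟩)
      filter_upwards [hmem] with p hp
      rw [cpF, if_pos ⟨hp.1, mem_ball.mp hp.2⟩]
    have hpt : pushF x₀ r q.1 (ψ q.2) ∈ ψ.target := by
      apply hball
      apply mem_closedBall.mpr
      exact le_of_lt (pushF_mem_ball2 hr hq.1 hm.2)
    have hg : ContinuousAt (fun p : E × M => ψ.symm (pushF x₀ r p.1 (ψ p.2))) q := by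
      have hinner : ContinuousAt (fun p : E × M => (p.1, ψ p.2)) q :=
        continuousAt_fst.prodMk ((ψ.continuousAt hm.1).comp continuousAt_snd)
      have houter : ContinuousAt (fun q : E × E => pushF x₀ r q.1 q.2) (q.1, ψ q.2) :=
        (continuous_pushF x₀ r).continuousAt
      have hmid : ContinuousAt (fun p : E × M => pushF x₀ r p.1 (ψ p.2)) q :=
        ContinuousAt.comp (f := fun p : E × M => (p.1, ψ p.2)) houter hinner
      exact ContinuousAt.comp (f := fun p : E × M => pushF x₀ r p.1 (ψ p.2))
        (ψ.continuousAt_symm hpt) hmid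
    exact (continuousAt_congr hev).mpr hg
  · -- away from the (compact) support
    have hKc : IsCompact (ψ.symm '' closedBall x₀ r) := by
      apply (isCompact_closedBall x₀ r).image_of_continuousOn
      exact ψ.symm.continuousOn.mono
        (Subset.trans (closedBall_subset_closedBall (by linarith)) hball)
    have hnm : q.2 ∉ ψ.symm '' closedBall x₀ r := by
      intro hcon
      obtain ⟨hsrc, hd⟩ := (mem_supp_iff hr hball q.2).mp hcon
      exact hm ⟨hsrc, by linarith⟩
    have hev : ∀ᶠ p : E × M in 𝓝 q, cpF ψ x₀ r p.1 p.2 = p.2 := by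
      have hmem : Prod.snd ⁻¹' (ψ.symm '' closedBall x₀ r)ᶜ ∈ 𝓝 q :=
        (hKc.isClosed.isOpen_compl.preimage continuous_snd).mem_nhds hnm
      filter_upwards [hmem] with p hp
      exact cpF_eq_self_of_far hr hball p.1 hp
    exact (continuousAt_congr hev).mpr continuousAt_snd

lemma continuousOn_cpG (hr : 0 < r) (hball : closedBall x₀ (2*r) ⊆ ψ.target) :
    ContinuousOn (fun q : E × M => cpG ψ x₀ r q.1 q.2)
      ({a : E | ‖a‖ < r} ×ˢ (univ : Set M)) := by
  intro q hq
  apply ContinuousAt.continuousWithinAt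
  by_cases hm : q.2 ∈ ψ.source ∧ dist (ψ q.2) x₀ < 2 * r
  · have hO : IsOpen (ψ.source ∩ ψ ⁻¹' (ball x₀ (2*r))) :=
      ψ.isOpen_inter_preimage isOpen_ball
    have hev : ∀ᶠ p : E × M in 𝓝 q, cpG ψ x₀ r p.1 p.2 = ψ.symm (pushInv x₀ r p.1 (ψ p.2)) := by
      have hmem : Prod.snd ⁻¹' (ψ.source ∩ ψ ⁻¹' (ball x₀ (2*r))) ∈ 𝓝 q :=
        (hO.preimage continuous_snd).mem_nhds (by exact ⟨hm.1, mem_ball.mpr hm.2⟩)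
      filter_upwards [hmem] with p hp
      rw [cpG, if_pos ⟨hp.1, mem_ball.mp hp.2⟩]
    have hpt : pushInv x₀ r q.1 (ψ q.2) ∈ ψ.target := by
      apply hball
      apply mem_closedBall.mpr
      exact le_of_lt (pushInv_mem_ball2 hr hq.1 hm.2)
    have hg : ContinuousAt (fun p : E × M => ψ.symm (pushInv x₀ r p.1 (ψ p.2))) q := by
      have hinner : ContinuousAt (fun p : E × M => (p.1, ψ p.2)) q :=
        continuousAt_fst.prodMk ((ψ.continuousAt hm.1).comp continuousAt_snd)
      have houter : ContinuousAt (fun q : E × E => pushInv x₀ r q.1 q.2) (q.1, ψ q.2) := by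
        refine (continuousOn_pushInv x₀ hr).continuousAt ?_
        exact (((isOpen_lt continuous_norm continuous_const).prod
          isOpen_univ)).mem_nhds ⟨hq.1, trivial⟩
      have hmid : ContinuousAt (fun p : E × M => pushInv x₀ r p.1 (ψ p.2)) q :=
        ContinuousAt.comp (f := fun p : E × M => (p.1, ψ p.2)) houter hinner
      exact ContinuousAt.comp (f := fun p : E × M => pushInv x₀ r p.1 (ψ p.2))
        (ψ.continuousAt_symm hpt) hmid
    exact (continuousAt_congr hev).mpr hg
  · have hKc : IsCompact (ψ.symm '' closedBall x₀ r) := by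
      apply (isCompact_closedBall x₀ r).image_of_continuousOn
      exact ψ.symm.continuousOn.mono
        (Subset.trans (closedBall_subset_closedBall (by linarith)) hball)
    have hnm : q.2 ∉ ψ.symm '' closedBall x₀ r := by
      intro hcon
      obtain ⟨hsrc, hd⟩ := (mem_supp_iff hr hball q.2).mp hcon
      exact hm ⟨hsrc, by linarith⟩
    have hev : ∀ᶠ p : E × M in 𝓝 q, cpG ψ x₀ r p.1 p.2 = p.2 := by
      have hmem : Prod.snd ⁻¹' (ψ.symm '' closedBall x₀ r)ᶜ ∈ 𝓝 q :=
        (hKc.isClosed.isOpen_compl.preimage continuous_snd).mem_nhds hnm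
      filter_upwards [hmem] with p hp
      exact cpG_eq_self_of_far hr hball p.1 hp
    exact (continuousAt_congr hev).mpr continuousAt_snd

/-- the push inside a chart as a homeomorphism of `M` -/
def cpHomeo (ψ : OpenPartialHomeomorph M E) (x₀ : E) (r : ℝ) (hr : 0 < r)
    (hball : closedBall x₀ (2*r) ⊆ ψ.target) (a : E) (ha : ‖a‖ < r) : M ≃ₜ M where
  toFun := cpF ψ x₀ r a
  invFun := cpG ψ x₀ r a
  left_inv := cpG_cpF hr hball ha
  right_inv := cpF_cpG hr hball ha
  continuous_toFun := by
    rw [continuous_iff_continuousAt]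
    intro m
    have h := (continuousOn_cpF hr hball).continuousAt
      (((isOpen_lt continuous_norm continuous_const).prod isOpen_univ).mem_nhds
        (show ((a : E), m) ∈ ({a : E | ‖a‖ < r} ×ˢ (univ : Set M)) from ⟨ha, trivial⟩))
    exact h.comp ((continuous_const.prodMk continuous_id).continuousAt)
  continuous_invFun := by
    rw [continuous_iff_continuousAt]
    intro m
    have h := (continuousOn_cpG hr hball).continuousAt
      (((isOpen_lt continuous_norm continuous_const).prod isOpen_univ).mem_nhds
        (show ((a : E), m) ∈ ({a : E | ‖a‖ < r} ×ˢ (univ : Set M)) from ⟨ha, trivial⟩))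
    exact h.comp ((continuous_const.prodMk continuous_id).continuousAt)

lemma cpHomeo_apply (hr : 0 < r) (hball : closedBall x₀ (2*r) ⊆ ψ.target) (a : E)
    (ha : ‖a‖ < r) (m : M) : cpHomeo ψ x₀ r hr hball a ha m = cpF ψ x₀ r a m := rfl

lemma cpHomeo_symm_apply (hr : 0 < r) (hball : closedBall x₀ (2*r) ⊆ ψ.target) (a : E)
    (ha : ‖a‖ < r) (m : M) : (cpHomeo ψ x₀ r hr hball a ha).symm m = cpG ψ x₀ r a m := rfl

end ChartPushSec


end Auxiliary

section Part4

open Set Topology unitInterval Metric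

/-- fixing fold lemma -/
lemma foldr_trans_apply_fix {S M : Type*} [TopologicalSpace M] (f : S → (M ≃ₜ M))
    (l : List S) (z : M) (hfix : ∀ s ∈ l, f s z = z) :
    (l.foldr (fun s h => (f s).trans h) (Homeomorph.refl M)) z = z := by
  induction l with
  | nil => rfl
  | cons a t iht =>
    simp only [List.foldr_cons, Homeomorph.trans_apply]
    rw [hfix a (List.mem_cons_self)]
    exact iht (fun s hs => hfix s (List.mem_cons_of_mem a hs))

/-- moving fold lemma -/
lemma foldr_trans_apply_move {S M : Type*} [TopologicalSpace M] (f : S → (M ≃ₜ M))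
    (l : List S) {s : S} {x y : M} :
    l.Nodup → s ∈ l → f s x = y → (∀ s' ∈ l, s' ≠ s → f s' x = x ∧ f s' y = y) →
    (l.foldr (fun s h => (f s).trans h) (Homeomorph.refl M)) x = y := by
  induction l with
  | nil => intro _ hs _ _; exact absurd hs List.not_mem_nil
  | cons a t iht =>
    intro hNd hs hmove hfix
    rw [List.nodup_cons] at hNd
    simp only [List.foldr_cons, Homeomorph.trans_apply]
    by_cases hsa : s = a
    · subst hsa
      rw [hmove]
      refine foldr_trans_apply_fix f t y ?_
      intro s' hs'
      exact (hfix s' (List.mem_cons_of_mem _ hs') (fun hE => hNd.1 (hE ▸ hs'))).2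
    · have hax : f a x = x := (hfix a (List.mem_cons_self) (fun hE => hsa hE.symm)).1
      rw [hax]
      refine iht hNd.2 ?_ hmove ?_
      · rcases List.mem_cons.mp hs with h | h
        · exact absurd h hsa
        · exact h
      · intro s' hs' hne; exact hfix s' (List.mem_cons_of_mem _ hs') hne

/-- joint continuity of folds -/
lemma foldr_joint_cont {S C M : Type*} [TopologicalSpace C] [TopologicalSpace M]
    (U : Set C) (f : S → C → (M ≃ₜ M))
    (hf : ∀ s, ContinuousOn (fun q : C × M => f s q.1 q.2) (U ×ˢ (univ : Set M)))
    (l : List S) :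
    ContinuousOn (fun q : C × M =>
      (l.foldr (fun s h => (f s q.1).trans h) (Homeomorph.refl M)) q.2)
      (U ×ˢ (univ : Set M)) := by
  induction l with
  | nil => exact continuous_snd.continuousOn
  | cons a t iht =>
    simp only [List.foldr_cons, Homeomorph.trans_apply]
    have hpair : ContinuousOn (fun q : C × M => ((q.1 : C), f a q.1 q.2))
        (U ×ˢ (univ : Set M)) := continuousOn_fst.prodMk (hf a)
    exact iht.comp hpair (fun q hq => ⟨hq.1, trivial⟩)

lemma foldr_symm_joint_cont {S C M : Type*} [TopologicalSpace C] [TopologicalSpace M]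
    (U : Set C) (f : S → C → (M ≃ₜ M))
    (hf : ∀ s, ContinuousOn (fun q : C × M => (f s q.1).symm q.2) (U ×ˢ (univ : Set M)))
    (l : List S) :
    ContinuousOn (fun q : C × M =>
      ((l.foldr (fun s h => (f s q.1).trans h) (Homeomorph.refl M)).symm) q.2)
      (U ×ˢ (univ : Set M)) := by
  induction l with
  | nil => exact continuous_snd.continuousOn
  | cons a t iht =>
    simp only [List.foldr_cons, Homeomorph.symm_trans_apply]
    have hpair : ContinuousOn (fun q : C × M =>
        ((q.1 : C), (t.foldr (fun s h => (f s q.1).trans h) (Homeomorph.refl M)).symm q.2))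
        (U ×ˢ (univ : Set M)) := continuousOn_fst.prodMk iht
    exact (hf a).comp hpair (fun q hq => ⟨hq.1, trivial⟩)

/-- post-composition transport on the embedding space -/
noncomputable def transport (n : ℕ) (S M : Type*) [TopologicalSpace S] [TopologicalSpace M]
    (sg : ConfSp S M → (M ≃ₜ M)) (c c' : ConfSp S M) (e : EmbSp n S M) : EmbSp n S M :=
  ⟨⟨fun xs => sg c' ((sg c).symm (e.1 xs)),
    (sg c').continuous.comp ((sg c).symm.continuous.comp e.1.continuous)⟩,
    (((sg c).symm.trans (sg c')).isOpenEmbedding).comp e.2⟩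

lemma transport_continuousOn (n : ℕ) (S M : Type*) [TopologicalSpace S] [TopologicalSpace M]
    [LocallyCompactSpace S] (sg : ConfSp S M → (M ≃ₜ M)) (U : Set (ConfSp S M))
    (hsg2 : ContinuousOn (fun q : ConfSp S M × M => sg q.1 q.2) (U ×ˢ (univ : Set M)))
    (hsg : ContinuousOn (fun q : ConfSp S M × M => (sg q.1).symm q.2) (U ×ˢ (univ : Set M))) :
    ContinuousOn (fun q : (ConfSp S M × ConfSp S M) × EmbSp n S M =>
      transport n S M sg q.1.1 q.1.2 q.2)
      ((U ×ˢ U) ×ˢ (univ : Set (EmbSp n S M))) := by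
  rw [continuousOn_iff_continuous_restrict]
  apply Continuous.subtype_mk
  apply ContinuousMap.continuous_of_continuous_uncurry
  set D := (U ×ˢ U) ×ˢ (univ : Set (EmbSp n S M)) with hD
  have hval : Continuous (fun d : ↥D => (d : (ConfSp S M × ConfSp S M) × EmbSp n S M)) :=
    continuous_subtype_val
  have hemb : Continuous (fun d : ↥D =>
      ((d : (ConfSp S M × ConfSp S M) × EmbSp n S M).2.1 :
        C(EuclideanSpace ℝ (Fin n) × S, M))) :=
    continuous_subtype_val.comp (continuous_snd.comp hval)
  have hc1 : Continuous (fun d : ↥D => (d : (ConfSp S M × ConfSp S M) × EmbSp n S M).1.1) :=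
    continuous_fst.comp (continuous_fst.comp hval)
  have hc2 : Continuous (fun d : ↥D => (d : (ConfSp S M × ConfSp S M) × EmbSp n S M).1.2) :=
    continuous_snd.comp (continuous_fst.comp hval)
  have hev : Continuous (fun p : ↥D × (EuclideanSpace ℝ (Fin n) × S) =>
      ((p.1 : (ConfSp S M × ConfSp S M) × EmbSp n S M).2.1 :
        C(EuclideanSpace ℝ (Fin n) × S, M)) p.2) :=
    continuous_eval.comp ((hemb.comp continuous_fst).prodMk continuous_snd)
  have hstep1 : Continuous (fun p : ↥D × (EuclideanSpace ℝ (Fin n) × S) =>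
      (sg ((p.1 : (ConfSp S M × ConfSp S M) × EmbSp n S M).1.1)).symm
        (((p.1 : (ConfSp S M × ConfSp S M) × EmbSp n S M).2.1 :
          C(EuclideanSpace ℝ (Fin n) × S, M)) p.2)) :=
    hsg.comp_continuous ((hc1.comp continuous_fst).prodMk hev)
      (fun p => ⟨p.1.2.1.1, trivial⟩)
  have hfinal : Continuous (fun p : ↥D × (EuclideanSpace ℝ (Fin n) × S) =>
      sg ((p.1 : (ConfSp S M × ConfSp S M) × EmbSp n S M).1.2)
        ((sg ((p.1 : (ConfSp S M × ConfSp S M) × EmbSp n S M).1.1)).symm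
          (((p.1 : (ConfSp S M × ConfSp S M) × EmbSp n S M).2.1 :
            C(EuclideanSpace ℝ (Fin n) × S, M)) p.2))) :=
    hsg2.comp_continuous ((hc2.comp continuous_fst).prodMk hstep1)
      (fun p => ⟨p.1.2.1.2, trivial⟩)
  exact hfinal

/-- The key geometric input : `evalOrigins` is locally transported. -/
theorem locallyTransported_evalOrigins (n : ℕ) (M : Type*) [TopologicalSpace M]
    [ChartedSpace (EuclideanSpace ℝ (Fin n)) M] [T2Space M] [SecondCountableTopology M]
    (S : Type*) [Fintype S] [TopologicalSpace S] [DiscreteTopology S] :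
    LocallyTransported (evalOrigins n S M) := by
  classical
  haveI : LocallyCompactSpace M := ChartedSpace.locallyCompactSpace (EuclideanSpace ℝ (Fin n)) M
  letI : MetricSpace M := TopologicalSpace.metrizableSpaceMetric M
  intro c₀
  set E := EuclideanSpace ℝ (Fin n) with hE
  set ψ : S → OpenPartialHomeomorph M E := fun s => chartAt E (c₀.1 s) with hψ
  have hsrc : ∀ s, c₀.1 s ∈ (ψ s).source := fun s => mem_chart_source E (c₀.1 s)
  set x₀ : S → E := fun s => ψ s (c₀.1 s) with hx₀
  -- pairwise separation of the configuration points
  obtain ⟨ε, hε0, hεsep⟩ : ∃ ε : ℝ, 0 < ε ∧ ∀ s t : S, s ≠ t → ε ≤ dist (c₀.1 s) (c₀.1 t) := by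
    set T : Finset (S × S) := Finset.univ.filter (fun p => p.1 ≠ p.2) with hT
    by_cases hTe : T.Nonempty
    · refine ⟨(T.image (fun p => dist (c₀.1 p.1) (c₀.1 p.2))).min' (hTe.image (fun p => dist (c₀.1 p.1) (c₀.1 p.2))), ?_, ?_⟩
      · obtain ⟨v, hv, hveq⟩ := Finset.mem_image.mp ((T.image (fun p => dist (c₀.1 p.1) (c₀.1 p.2))).min'_mem (hTe.image (fun p => dist (c₀.1 p.1) (c₀.1 p.2))))
        rw [← hveq]
        have hvne : v.1 ≠ v.2 := (Finset.mem_filter.mp hv).2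
        exact dist_pos.mpr (fun hEq => hvne (c₀.2 hEq))
      · intro s t hst
        apply Finset.min'_le
        exact Finset.mem_image.mpr ⟨(s, t), Finset.mem_filter.mpr ⟨Finset.mem_univ _, hst⟩, rfl⟩
    · refine ⟨1, one_pos, fun s t hst => ?_⟩
      exact absurd (Finset.mem_filter.mpr ⟨Finset.mem_univ ((s, t) : S × S), hst⟩)
        (fun h => hTe ⟨_, h⟩)
  set V : S → Set M := fun s => ball (c₀.1 s) (ε/2) with hV
  have hVdisj : ∀ s t : S, s ≠ t → ∀ m, m ∈ V s → m ∉ V t := by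
    intro s t hst m hms hmt
    have h1 := hεsep s t hst
    have h2 : dist (c₀.1 s) (c₀.1 t) < ε := by
      calc dist (c₀.1 s) (c₀.1 t) ≤ dist (c₀.1 s) m + dist m (c₀.1 t) := dist_triangle _ _ _
        _ < ε/2 + ε/2 := by
            rw [dist_comm (c₀.1 s) m]
            exact add_lt_add hms hmt
        _ = ε := by ring
    linarith
  -- radii
  have hradius : ∀ s : S, ∃ ρ : ℝ, 0 < ρ ∧ ball (x₀ s) ρ ⊆ (ψ s).target ∧
      ∀ x ∈ ball (x₀ s) ρ, (ψ s).symm x ∈ V s := by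
    intro s
    have hopen : IsOpen ((ψ s).target ∩ (ψ s).symm ⁻¹' (V s)) :=
      (ψ s).isOpen_inter_preimage_symm isOpen_ball
    have hmem : x₀ s ∈ (ψ s).target ∩ (ψ s).symm ⁻¹' (V s) := by
      refine ⟨(ψ s).map_source (hsrc s), ?_⟩
      rw [mem_preimage, (ψ s).left_inv (hsrc s)]
      exact mem_ball_self (by positivity)
    obtain ⟨ρ, hρ0, hρ⟩ := Metric.isOpen_iff.mp hopen _ hmem
    exact ⟨ρ, hρ0, fun x hx => (hρ hx).1, fun x hx => (hρ hx).2⟩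
  choose ρ hρ0 hρtgt hρV using hradius
  set r : S → ℝ := fun s => ρ s / 5 with hrdef
  have hr0 : ∀ s, 0 < r s := fun s => by
    have := hρ0 s
    rw [hrdef]
    positivity
  have hballρ : ∀ s, closedBall (x₀ s) (2 * r s) ⊆ ball (x₀ s) (ρ s) := by
    intro s x hx
    have h1 := mem_closedBall.mp hx
    have h2 := hρ0 s
    apply mem_ball.mpr
    have : r s = ρ s / 5 := rfl
    linarith [this ▸ h1]
  have hball : ∀ s, closedBall (x₀ s) (2 * r s) ⊆ (ψ s).target :=
    fun s => Subset.trans (hballρ s) (hρtgt s)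
  have hsupp : ∀ s, ∀ x ∈ closedBall (x₀ s) (2 * r s), (ψ s).symm x ∈ V s :=
    fun s x hx => hρV s x (hballρ s hx)
  -- the neighbourhood U of c₀
  set Os : S → Set M := fun s => (ψ s).source ∩ (ψ s) ⁻¹' (ball (x₀ s) (r s / 2)) with hOs
  set U : Set (ConfSp S M) := ⋂ s, ((fun c : ConfSp S M => c.1 s) ⁻¹' Os s) with hU
  have hevalc : ∀ s : S, Continuous (fun c : ConfSp S M => c.1 s) := by
    intro s
    exact (continuous_apply s).comp continuous_subtype_val
  have hUopen : IsOpen U := by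
    apply isOpen_iInter_of_finite
    intro s
    exact ((ψ s).isOpen_inter_preimage isOpen_ball).preimage (hevalc s)
  have hc₀U : c₀ ∈ U := by
    apply mem_iInter.mpr
    intro s
    refine ⟨hsrc s, ?_⟩
    rw [mem_preimage]
    exact mem_ball_self (by have := hr0 s; positivity)
  have hUprop : ∀ c ∈ U, ∀ s, c.1 s ∈ (ψ s).source ∧ dist (ψ s (c.1 s)) (x₀ s) < r s / 2 := by
    intro c hc s
    have h := mem_iInter.mp hc s
    exact ⟨h.1, mem_ball.mp h.2⟩
  -- displacement vectors
  set av : S → ConfSp S M → E := fun s c =>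
    if (c.1 s ∈ (ψ s).source ∧ dist (ψ s (c.1 s)) (x₀ s) < r s) then ψ s (c.1 s) - x₀ s
    else 0 with hav
  have havnorm : ∀ s c, ‖av s c‖ < r s := by
    intro s c
    rw [hav]
    dsimp only
    split_ifs with h
    · rw [← dist_eq_norm]; exact h.2
    · rw [norm_zero]; exact hr0 s
  have havU : ∀ s, ∀ c ∈ U, av s c = ψ s (c.1 s) - x₀ s := by
    intro s c hc
    have hcs := hUprop c hc s
    rw [hav]
    dsimp only
    rw [if_pos ⟨hcs.1, by have := hr0 s; linarith [hcs.2]⟩]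
  have havcont : ∀ s, ContinuousOn (av s) U := by
    intro s
    set W : Set (ConfSp S M) := (fun c : ConfSp S M => c.1 s) ⁻¹'
      ((ψ s).source ∩ (ψ s) ⁻¹' (ball (x₀ s) (r s))) with hW
    have hWU : U ⊆ W := by
      intro c hc
      have hcs := hUprop c hc s
      exact ⟨hcs.1, mem_ball.mpr (by have := hr0 s; linarith [hcs.2])⟩
    refine ContinuousOn.mono ?_ hWU
    have hnice : ContinuousOn (fun c : ConfSp S M => ψ s (c.1 s) - x₀ s) W := by
      apply ContinuousOn.sub _ continuousOn_const
      refine (ψ s).continuousOn.comp ((hevalc s).continuousOn) ?_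
      intro c hc
      exact hc.1
    refine hnice.congr ?_
    intro c hc
    rw [hav]
    dsimp only
    rw [if_pos ⟨hc.1, mem_ball.mp hc.2⟩]
  -- the pushes
  set P : S → ConfSp S M → (M ≃ₜ M) := fun s c =>
    cpHomeo (ψ s) (x₀ s) (r s) (hr0 s) (hball s) (av s c) (havnorm s c) with hP
  have hPmove : ∀ s, ∀ c ∈ U, P s c (c₀.1 s) = c.1 s := by
    intro s c hc
    have hcs := hUprop c hc s
    rw [hP]
    dsimp only
    rw [cpHomeo_apply, cpF_center (hr0 s) (hsrc s) rfl, havU s c hc]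
    have h1 : x₀ s + (ψ s (c.1 s) - x₀ s) = ψ s (c.1 s) := by abel
    rw [h1, (ψ s).left_inv hcs.1]
  have hmemV : ∀ s, ∀ c ∈ U, c.1 s ∈ V s := by
    intro s c hc
    have hcs := hUprop c hc s
    have h1 : c.1 s = (ψ s).symm (ψ s (c.1 s)) := ((ψ s).left_inv hcs.1).symm
    rw [h1]
    apply hsupp s
    apply mem_closedBall.mpr
    have := hr0 s
    linarith [hcs.2]
  have hc₀V : ∀ s, c₀.1 s ∈ V s := fun s => mem_ball_self (by positivity)
  have hPfix : ∀ s s' : S, s' ≠ s → ∀ c, ∀ m ∈ V s, P s' c m = m := by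
    intro s s' hne c m hm
    rw [hP]
    dsimp only
    rw [cpHomeo_apply]
    apply cpF_eq_self_of_far (hr0 s') (hball s')
    intro hcon
    have hmV : m ∈ V s' := by
      obtain ⟨x, hx, rfl⟩ := hcon
      refine hsupp s' x (closedBall_subset_closedBall ?_ hx)
      have := hr0 s'
      linarith
    exact hVdisj s s' (fun hEq => hne hEq.symm) m hm hmV
  -- the local section
  set l : List S := Finset.univ.toList with hl
  have hlnd : l.Nodup := Finset.nodup_toList _
  have hlmem : ∀ s : S, s ∈ l := fun s => (Finset.mem_toList).mpr (Finset.mem_univ s)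
  set sg : ConfSp S M → (M ≃ₜ M) := fun c =>
    l.foldr (fun s h => (P s c).trans h) (Homeomorph.refl M) with hsg
  have hsgmove : ∀ c ∈ U, ∀ s, sg c (c₀.1 s) = c.1 s := by
    intro c hc s
    refine foldr_trans_apply_move (fun s => P s c) l hlnd (hlmem s) (hPmove s c hc) ?_
    intro s' hs' hne
    exact ⟨hPfix s s' hne c _ (hc₀V s), hPfix s s' hne c _ (hmemV s c hc)⟩
  have hsgsymm : ∀ c ∈ U, ∀ s, (sg c).symm (c.1 s) = c₀.1 s := by
    intro c hc s
    rw [← hsgmove c hc s, Homeomorph.symm_apply_apply]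
  -- joint continuity of sg and its inverse
  have hPcont : ∀ s, ContinuousOn (fun q : ConfSp S M × M => P s q.1 q.2)
      (U ×ˢ (univ : Set M)) := by
    intro s
    have hmap : MapsTo (fun q : ConfSp S M × M => (av s q.1, q.2)) (U ×ˢ (univ : Set M))
        ({a : E | ‖a‖ < r s} ×ˢ (univ : Set M)) := fun q hq => ⟨havnorm s q.1, trivial⟩
    have hpaircont : ContinuousOn (fun q : ConfSp S M × M => (av s q.1, q.2))
        (U ×ˢ (univ : Set M)) :=
      ((havcont s).comp continuousOn_fst (fun q hq => hq.1)).prodMk continuousOn_snd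
    exact (continuousOn_cpF (hr0 s) (hball s)).comp hpaircont hmap
  have hPscont : ∀ s, ContinuousOn (fun q : ConfSp S M × M => (P s q.1).symm q.2)
      (U ×ˢ (univ : Set M)) := by
    intro s
    have hmap : MapsTo (fun q : ConfSp S M × M => (av s q.1, q.2)) (U ×ˢ (univ : Set M))
        ({a : E | ‖a‖ < r s} ×ˢ (univ : Set M)) := fun q hq => ⟨havnorm s q.1, trivial⟩
    have hpaircont : ContinuousOn (fun q : ConfSp S M × M => (av s q.1, q.2))
        (U ×ˢ (univ : Set M)) :=
      ((havcont s).comp continuousOn_fst (fun q hq => hq.1)).prodMk continuousOn_snd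
    exact (continuousOn_cpG (hr0 s) (hball s)).comp hpaircont hmap
  have hsgcont : ContinuousOn (fun q : ConfSp S M × M => sg q.1 q.2)
      (U ×ˢ (univ : Set M)) := foldr_joint_cont U (fun s c => P s c) hPcont l
  have hsgscont : ContinuousOn (fun q : ConfSp S M × M => (sg q.1).symm q.2)
      (U ×ˢ (univ : Set M)) := foldr_symm_joint_cont U (fun s c => P s c) hPscont l
  -- assemble the transport
  refine ⟨U, hUopen, hc₀U, fun c c' e => if c ∈ U ∧ c' ∈ U then
    transport n S M sg c c' e else e, ?_, ?_, ?_, ?_⟩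
  · -- continuity
    refine ContinuousOn.congr (transport_continuousOn n S M sg U hsgcont hsgscont) ?_
    rintro ⟨⟨c, c'⟩, e⟩ ⟨⟨hc, hc'⟩, -⟩
    beta_reduce
    rw [if_pos (show c ∈ U ∧ c' ∈ U from ⟨hc, hc'⟩)]
  · -- identity
    intro c hc e
    beta_reduce
    rw [if_pos (show c ∈ U ∧ c ∈ U from ⟨hc, hc⟩)]
    apply Subtype.ext
    apply ContinuousMap.ext
    intro xs
    exact (sg c).apply_symm_apply _
  · -- cocycle
    intro c hc c' hc' c'' hc'' e
    beta_reduce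
    rw [if_pos (show c' ∈ U ∧ c'' ∈ U from ⟨hc', hc''⟩),
      if_pos (show c ∈ U ∧ c' ∈ U from ⟨hc, hc'⟩),
      if_pos (show c ∈ U ∧ c'' ∈ U from ⟨hc, hc''⟩)]
    apply Subtype.ext
    apply ContinuousMap.ext
    intro xs
    show sg c'' ((sg c').symm (sg c' ((sg c).symm (e.1 xs)))) = sg c'' ((sg c).symm (e.1 xs))
    rw [Homeomorph.symm_apply_apply]
  · -- moves the origins correctly
    intro c hc c' hc' e he
    beta_reduce
    rw [if_pos (show c ∈ U ∧ c' ∈ U from ⟨hc, hc'⟩)]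
    apply Subtype.ext
    funext s
    have heval : e.1 (0, s) = c.1 s := congrFun (congrArg Subtype.val he) s
    show sg c' ((sg c).symm (e.1 (0, s))) = c'.1 s
    rw [heval, hsgsymm c hc s, hsgmove c' hc' s]

end Part4

/-- For an `n`-manifold `M` and a finite set `S`, evaluation at the
origins `Emb(ℝⁿ × S, M) → Conf(S, M)` is a Serre fibration. -/
theorem statement3 (n : ℕ) (M : Type*) [TopologicalSpace M]
    [ChartedSpace (EuclideanSpace ℝ (Fin n)) M] [T2Space M] [SecondCountableTopology M]
    (S : Type*) [Fintype S] [TopologicalSpace S] [DiscreteTopology S] :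
    IsSerreFibration (evalOrigins n S M) :=
  isSerreFibration_of_locallyTransported _ (locallyTransported_evalOrigins n M S)
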